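/- arXiv:1712.04047 — 2 statements merged into one kernel-verified Lean document; each statement's English description precedes it below -/
import Mathlib

section
/- Let f(x) = Hx + c, let U ∈ ℝ^{2n×2k} be symplectic with left inverse U† = J_k^{-1}U^T J_n, let F = U†HU, and suppose x − x₋ ∈ Range(U). Then the projected explicit exponential midpoint step x₊ = x + U e^{hF} U†(x₋ − x) + 2h U φ(hF) U† f(x) satisfies ½(x₊ + x) = x̂ + h U φ(hF) U†(H x̂ + c), where x̂ = ½(x + x₋); i.e., the averages propagate by the projected exponential Euler method. -/
open Matrix

noncomputable def Jmat (n : ℕ) : Matrix (Fin n ⊕ Fin n) (Fin n ⊕ Fin n) ℝ :=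
  Matrix.fromBlocks 0 1 (-1) 0

attribute [local instance] Matrix.linftyOpNormedRing Matrix.linftyOpNormedAlgebra

noncomputable def expM {m : Type*} [Fintype m] [DecidableEq m] (A : Matrix m m ℝ) : Matrix m m ℝ :=
  NormedSpace.exp A

/-- `phiM A = ∫₀¹ e^{sA} ds`, the matrix version of `φ(z) = (e^z-1)/z`. -/
noncomputable def phiM {m : Type*} [Fintype m] [DecidableEq m] (A : Matrix m m ℝ) : Matrix m m ℝ :=
  ∫ s in (0:ℝ)..1, NormedSpace.exp (s • A)

lemma phiM_mul_self {m : Type*} [Fintype m] [DecidableEq m] (A : Matrix m m ℝ) :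
    phiM A * A = expM A - 1 := by
  have hc : Continuous fun s : ℝ => NormedSpace.exp (s • A) :=
    NormedSpace.exp_continuous.comp (continuous_id.smul continuous_const)
  have hd : ∀ s ∈ Set.uIcc (0:ℝ) 1,
      HasDerivAt (fun u : ℝ => NormedSpace.exp (u • A))
        (NormedSpace.exp (s • A) * A) s := fun s _ =>
    hasDerivAt_exp_smul_const A s
  have hint := (hc.mul (continuous_const (y := A))).intervalIntegrable (μ := MeasureTheory.volume) 0 1
  have key := intervalIntegral.integral_eq_sub_of_hasDerivAt hd hint
  have hL := ContinuousLinearMap.intervalIntegral_comp_comm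
      (LinearMap.toContinuousLinearMap (LinearMap.mulRight ℝ A)) (a := (0:ℝ)) (b := 1)
      (μ := MeasureTheory.volume) (hc.intervalIntegrable 0 1)
  erw [LinearMap.coe_toContinuousLinearMap'] at hL
  simp only [LinearMap.mulRight_apply] at hL
  rw [phiM, expM, ← hL, key, one_smul, zero_smul, NormedSpace.exp_zero]

lemma Jmat_inv (k : ℕ) : (Jmat k)⁻¹ = -(Jmat k) := by
  apply Matrix.inv_eq_right_inv
  simp [Jmat, Matrix.fromBlocks_multiply, ← Matrix.fromBlocks_one, Matrix.fromBlocks_neg]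

theorem stmt13 (n k : ℕ) (H : Matrix (Fin n ⊕ Fin n) (Fin n ⊕ Fin n) ℝ)
    (c : (Fin n ⊕ Fin n) → ℝ)
    (f : ((Fin n ⊕ Fin n) → ℝ) → ((Fin n ⊕ Fin n) → ℝ))
    (hf : ∀ x, f x = H.mulVec x + c)
    (U : Matrix (Fin n ⊕ Fin n) (Fin k ⊕ Fin k) ℝ) (hU : Uᵀ * Jmat n * U = Jmat k)
    (Udag : Matrix (Fin k ⊕ Fin k) (Fin n ⊕ Fin n) ℝ) (hUdag : Udag = (Jmat k)⁻¹ * Uᵀ * Jmat n)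
    (F : Matrix (Fin k ⊕ Fin k) (Fin k ⊕ Fin k) ℝ) (hF : F = Udag * H * U)
    (h : ℝ) (x xm xp : (Fin n ⊕ Fin n) → ℝ)
    (hrange : ∃ ζ, x - xm = U.mulVec ζ)
    (hxp : xp = x + U.mulVec ((expM (h • F)).mulVec (Udag.mulVec (xm - x)))
      + (2 * h) • U.mulVec ((phiM (h • F)).mulVec (Udag.mulVec (f x)))) :
    (1/2 : ℝ) • (xp + x)
      = (1/2 : ℝ) • (x + xm)
        + h • U.mulVec ((phiM (h • F)).mulVec
            (Udag.mulVec (H.mulVec ((1/2 : ℝ) • (x + xm)) + c))) := by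
  obtain ⟨ζ, hζ⟩ := hrange
  -- U has left inverse Udag
  have hJJ : Jmat k * Jmat k = -1 := by
    simp [Jmat, Matrix.fromBlocks_multiply, ← Matrix.fromBlocks_one, Matrix.fromBlocks_neg]
  have hUU : Udag * U = 1 := by
    rw [hUdag, Jmat_inv, Matrix.mul_assoc, Matrix.mul_assoc, ← Matrix.mul_assoc Uᵀ, hU,
      Matrix.neg_mul, hJJ, neg_neg]
  set A := h • F with hA
  -- the key matrix identity
  have hM : U * expM A * Udag * U = U + h • (U * phiM A * Udag * H * U) := by
    have h2 : h • (U * phiM A * Udag * H * U) = U * (phiM A * A) := by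
      rw [hA, hF]
      simp only [Matrix.mul_assoc, Matrix.mul_smul, Matrix.smul_mul]
    rw [Matrix.mul_assoc (U * expM A), hUU, Matrix.mul_one, h2, phiM_mul_self,
      Matrix.mul_sub, Matrix.mul_one]
    abel
  have hxm : xm = x + U.mulVec (-ζ) := by
    rw [Matrix.mulVec_neg, ← hζ]; abel
  subst hxm hxp
  have hfx := hf x
  have hMv := congrArg (fun M => Matrix.mulVec M (-ζ)) hM
  simp only [Matrix.add_mulVec, Matrix.smul_mulVec] at hMv
  simp only [hfx, Matrix.mulVec_mulVec, Matrix.mulVec_add, Matrix.mulVec_smul, smul_add,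
    Matrix.add_mulVec, Matrix.smul_mulVec]
  simp only [Matrix.mulVec_neg, Matrix.smul_mulVec, smul_neg, neg_neg, smul_add,
    smul_smul, Matrix.mul_assoc, add_sub_cancel_left, Matrix.mulVec_mulVec] at hMv ⊢
  linear_combination (norm := module) ((1:ℝ)/2) • hMv
end

section
/- For the explicit midpoint rule applied to the linear homogeneous Hamiltonian system, x₊ = x₋ + 2hHx with H Hamiltonian, the quantity ω(Hx, x₊) equals ω(Hx₋, x): i.e., x^T H^T J x₊ = x₋^T H^T J x. -/
open Matrix

lemma mulVec_dot (m : Type*) [Fintype m] (M : Matrix m m ℝ) (u v : m → ℝ) :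
    M.mulVec u ⬝ᵥ v = u ⬝ᵥ Mᵀ.mulVec v := by
  rw [dotProduct_comm, Matrix.dotProduct_mulVec, ← Matrix.mulVec_transpose,
    dotProduct_comm]

lemma Jtrans (n : ℕ) : (Jmat n)ᵀ = -(Jmat n) := by
  simp [Jmat, Matrix.fromBlocks_transpose, Matrix.fromBlocks_neg]

lemma Jsq (n : ℕ) : Jmat n * Jmat n = -1 := by
  simp [Jmat, Matrix.fromBlocks_multiply]
  rw [← Matrix.fromBlocks_one, Matrix.fromBlocks_neg]
  simp

theorem stmt15 (n : ℕ) (H : Matrix (Fin n ⊕ Fin n) (Fin n ⊕ Fin n) ℝ)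
    (hH : Hᵀ = Jmat n * H * Jmat n) (h : ℝ) (x xm xp : (Fin n ⊕ Fin n) → ℝ)
    (hxp : xp = xm + (2 * h) • H.mulVec x) :
    H.mulVec x ⬝ᵥ (Jmat n).mulVec xp = H.mulVec xm ⬝ᵥ (Jmat n).mulVec x := by
  have hskew : ∀ u : (Fin n ⊕ Fin n) → ℝ, u ⬝ᵥ (Jmat n).mulVec u = 0 := by
    intro u
    have h1 : u ⬝ᵥ (Jmat n).mulVec u = -(u ⬝ᵥ (Jmat n).mulVec u) := by
      conv_lhs => rw [dotProduct_comm, mulVec_dot, Jtrans, Matrix.neg_mulVec,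
        dotProduct_neg]
    linarith
  have hMsymm : (Hᵀ * Jmat n)ᵀ = Hᵀ * Jmat n := by
    rw [Matrix.transpose_mul, Matrix.transpose_transpose, Jtrans, hH,
      Matrix.mul_assoc, Matrix.mul_assoc, Jsq]
    simp [Matrix.mul_assoc]
  have key : ∀ u v : (Fin n ⊕ Fin n) → ℝ,
      H.mulVec u ⬝ᵥ (Jmat n).mulVec v = u ⬝ᵥ (Hᵀ * Jmat n).mulVec v := by
    intro u v
    rw [mulVec_dot, Matrix.mulVec_mulVec]
  have zero : H.mulVec x ⬝ᵥ (Jmat n).mulVec (H.mulVec x) = 0 := hskew _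
  rw [hxp, Matrix.mulVec_add, Matrix.mulVec_smul, dotProduct_add,
    dotProduct_smul, zero, smul_zero, add_zero, key, key,
    dotProduct_comm, Matrix.dotProduct_mulVec, ← Matrix.mulVec_transpose, hMsymm,
    dotProduct_comm]
end
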